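/- For fixed positive integers a, b, j, consider the map N_j sending (U, P) ∈ brew(j, a+b) × SH(a,b) to the matrix product U·P ∈ ℕ₀^{j×(a+b)}. If U·P = U'·P' for U, U' ∈ brew(j,a+b) and P, P' ∈ SH(a,b), then U = U'. In other words, for each W in the image of N_j there is a unique U such that N_j(U,P) = W for some P. -/

import Mathlib

/-- `IsBrew M`: `M` is the one-hot matrix encoding of a composition, i.e. its columns are
standard basis vectors `e_{ι j}` with `ι` weakly increasing, surjective, and with
consecutive increments at most `1`. -/
def IsBrew {v ℓ : ℕ} (M : Matrix (Fin v) (Fin ℓ) ℕ) : Prop :=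
  ∃ ι : Fin ℓ → Fin v, Monotone ι ∧ Function.Surjective ι ∧
    (∀ (j : ℕ) (h : j + 1 < ℓ),
      ((ι ⟨j + 1, h⟩ : Fin v) : ℕ) ≤ ((ι ⟨j, Nat.lt_of_succ_lt h⟩ : Fin v) : ℕ) + 1) ∧
    M = Matrix.of fun i j => if i = ι j then 1 else 0

/-- `IsQSH M` (for `M` of size `j × (m+s)`): the columns of `M` are standard basis vectors
`e_{ι₁},…,e_{ι_m},e_{κ₁},…,e_{κ_s}` with `ι` and `κ` strictly increasing, and `M` is right
invertible (every standard basis vector occurs as a column). -/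
def IsQSH {m s j : ℕ} (M : Matrix (Fin j) (Fin (m + s)) ℕ) : Prop :=
  ∃ ι : Fin m → Fin j, ∃ κ : Fin s → Fin j, StrictMono ι ∧ StrictMono κ ∧
    Function.Surjective (Sum.elim ι κ) ∧
    M = Matrix.of fun r c =>
      Sum.elim (fun p => if r = ι p then 1 else 0) (fun q => if r = κ q then 1 else 0)
        (finSumFinEquiv.symm c)

/-- `IsSH M`: `M` is a shuffle permutation matrix
`[e_{ι₁} ⋯ e_{ι_a} e_{κ₁} ⋯ e_{κ_b}]` with `ι`, `κ` strictly increasing. -/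
def IsSH {a b : ℕ} (M : Matrix (Fin (a + b)) (Fin (a + b)) ℕ) : Prop :=
  ∃ ι : Fin a → Fin (a + b), ∃ κ : Fin b → Fin (a + b), StrictMono ι ∧ StrictMono κ ∧
    Function.Bijective (Sum.elim ι κ) ∧
    M = Matrix.of fun r c =>
      Sum.elim (fun p => if r = ι p then 1 else 0) (fun q => if r = κ q then 1 else 0)
        (finSumFinEquiv.symm c)

/-- Block-diagonal concatenation `diag(U₁, U₂)` of rectangular matrices. -/
def blockDiag {u₁ u₂ a b : ℕ} (U₁ : Matrix (Fin u₁) (Fin a) ℕ)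
    (U₂ : Matrix (Fin u₂) (Fin b) ℕ) : Matrix (Fin (u₁ + u₂)) (Fin (a + b)) ℕ :=
  Matrix.reindex finSumFinEquiv finSumFinEquiv (Matrix.fromBlocks U₁ 0 0 U₂)

/-- The factorial `U!` of a brew matrix: the product of the factorials of the parts of
its corresponding composition (the parts are the row sums). -/
def brewFact {v ℓ : ℕ} (M : Matrix (Fin v) (Fin ℓ) ℕ) : ℕ :=
  ∏ i : Fin v, Nat.factorial (∑ j : Fin ℓ, M i j)

lemma mono_le_iff {ℓ v : ℕ} (ι : Fin ℓ → Fin v) (hι : Monotone ι) (j : Fin ℓ) (i : ℕ) :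
    ((ι j : ℕ) ≤ i) ↔ (j : ℕ) < (Finset.univ.filter fun k => ((ι k : ℕ) ≤ i)).card := by
  constructor
  · intro hji
    have hsub : Finset.Iic j ⊆ Finset.univ.filter fun k => ((ι k : ℕ) ≤ i) := by
      intro k hk
      simp only [Finset.mem_filter, Finset.mem_univ, true_and]
      exact le_trans (Fin.le_def.mp (hι (Finset.mem_Iic.mp hk))) hji
    have := Finset.card_le_card hsub
    have hIic : (Finset.Iic j).card = (j : ℕ) + 1 := by
      simp
    omega
  · intro hlt
    by_contra hni
    have hsub : (Finset.univ.filter fun k => ((ι k : ℕ) ≤ i)) ⊆ Finset.Iio j := by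
      intro k hk
      simp only [Finset.mem_filter, Finset.mem_univ, true_and] at hk
      simp only [Finset.mem_Iio]
      by_contra hkj
      push_neg at hkj
      exact hni (le_trans (Fin.le_def.mp (hι hkj)) hk)
    have := Finset.card_le_card hsub
    have hIio : (Finset.Iio j).card = (j : ℕ) := by simp
    omega

lemma card_le_filter {ℓ v : ℕ} (ι : Fin ℓ → Fin v) (i : ℕ) :
    (Finset.univ.filter fun k => ((ι k : ℕ) ≤ i)).card
      = ∑ i' : Fin v, if (i' : ℕ) ≤ i then
          (Finset.univ.filter fun k => ι k = i').card else 0 := by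
  simp only [Finset.card_filter]
  have : ∀ i' : Fin v, (if (i' : ℕ) ≤ i then (∑ k : Fin ℓ, if ι k = i' then 1 else 0) else 0)
      = ∑ k : Fin ℓ, if ι k = i' then (if (i' : ℕ) ≤ i then 1 else 0) else 0 := by
    intro i'
    split_ifs with hc
    · simp
    · simp
  rw [Finset.sum_congr rfl fun i' _ => this i', Finset.sum_comm]
  refine Finset.sum_congr rfl fun k _ => ?_
  rw [Finset.sum_ite_eq (Finset.univ) (ι k) (fun i' => if (i' : ℕ) ≤ i then 1 else 0)]
  simp

lemma monotone_eq_of_counts {ℓ v : ℕ} (ι ι' : Fin ℓ → Fin v) (hι : Monotone ι)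
    (hι' : Monotone ι')
    (hc : ∀ i : Fin v, (Finset.univ.filter fun k => ι k = i).card
        = (Finset.univ.filter fun k => ι' k = i).card) : ι = ι' := by
  have hcard : ∀ i : ℕ, (Finset.univ.filter fun k => ((ι k : ℕ) ≤ i)).card
      = (Finset.univ.filter fun k => ((ι' k : ℕ) ≤ i)).card := by
    intro i
    rw [card_le_filter, card_le_filter]
    exact Finset.sum_congr rfl fun i' _ => by rw [hc i']
  funext j
  have h1 : (ι j : ℕ) ≤ (ι' j : ℕ) := by
    rw [mono_le_iff ι hι, hcard]
    exact (mono_le_iff ι' hι' j _).mp le_rfl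
  have h2 : (ι' j : ℕ) ≤ (ι j : ℕ) := by
    rw [mono_le_iff ι' hι', ← hcard]
    exact (mono_le_iff ι hι j _).mp le_rfl
  exact Fin.ext (le_antisymm h1 h2)

lemma sh_row_sum {a b : ℕ} {P : Matrix (Fin (a + b)) (Fin (a + b)) ℕ} (hP : IsSH P)
    (r : Fin (a + b)) : ∑ c : Fin (a + b), P r c = 1 := by
  obtain ⟨ιP, κP, -, -, hbij, hPeq⟩ := hP
  subst hPeq
  have h1 : ∑ c : Fin (a + b),
      (Matrix.of fun r c =>
        Sum.elim (fun p => if r = ιP p then 1 else 0) (fun q => if r = κP q then 1 else 0)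
          (finSumFinEquiv.symm c)) r c
      = ∑ x : Fin a ⊕ Fin b, (if r = Sum.elim ιP κP x then 1 else 0) := by
    rw [← Equiv.sum_comp finSumFinEquiv.symm
      (fun x => (if r = Sum.elim ιP κP x then (1:ℕ) else 0))]
    refine Finset.sum_congr rfl fun c _ => ?_
    cases hx : finSumFinEquiv.symm c with
    | inl p => simp [hx]; exact if_congr Iff.rfl rfl rfl
    | inr q => simp [hx]; exact if_congr Iff.rfl rfl rfl
  rw [h1, ← Equiv.sum_comp (Equiv.ofBijective _ hbij).symm
      (fun x => (if r = Sum.elim ιP κP x then (1:ℕ) else 0))]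
  have : ∀ y : Fin (a + b),
      (if r = Sum.elim ιP κP ((Equiv.ofBijective _ hbij).symm y) then (1:ℕ) else 0)
        = if r = y then 1 else 0 := by
    intro y
    have := Equiv.ofBijective_apply_symm_apply _ hbij y
    rw [this]
  rw [Finset.sum_congr rfl fun y _ => this y]
  simp

/-- if `U·P = U'·P'` with `U, U' ∈ brew(j, a+b)` and `P, P' ∈ SH(a,b)`,
then `U = U'`; i.e. each element of the image of `N_j : (U,P) ↦ U·P` determines `U`. -/
theorem N_determines_U (a b j : ℕ) (ha : 0 < a) (hb : 0 < b) (hj : 0 < j)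
    (U U' : Matrix (Fin j) (Fin (a + b)) ℕ) (P P' : Matrix (Fin (a + b)) (Fin (a + b)) ℕ)
    (hU : IsBrew U) (hU' : IsBrew U') (hP : IsSH P) (hP' : IsSH P')
    (h : U * P = U' * P') : U = U' := by
  obtain ⟨ι, hmι, -, -, hUeq⟩ := hU
  obtain ⟨ι', hmι', -, -, hU'eq⟩ := hU'
  -- row sums of U*P equal row sums of U
  have hrow : ∀ (V : Matrix (Fin j) (Fin (a + b)) ℕ)
      (Q : Matrix (Fin (a + b)) (Fin (a + b)) ℕ), IsSH Q →
      ∀ i, ∑ c : Fin (a + b), (V * Q) i c = ∑ k : Fin (a + b), V i k := by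
    intro V Q hQ i
    simp only [Matrix.mul_apply]
    rw [Finset.sum_comm]
    refine Finset.sum_congr rfl fun k _ => ?_
    rw [← Finset.mul_sum, sh_row_sum hQ k, mul_one]
  have hsums : ∀ i, ∑ k : Fin (a + b), U i k = ∑ k : Fin (a + b), U' i k := by
    intro i
    rw [← hrow U P hP i, ← hrow U' P' hP' i, h]
  have hcounts : ∀ i : Fin j, (Finset.univ.filter fun k => ι k = i).card
      = (Finset.univ.filter fun k => ι' k = i).card := by
    intro i
    have hs := hsums i
    rw [hUeq, hU'eq] at hs
    simp only [Matrix.of_apply] at hs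
    rw [Finset.card_filter, Finset.card_filter]
    calc (∑ k : Fin (a + b), if ι k = i then 1 else 0)
        = ∑ k : Fin (a + b), if i = ι k then 1 else 0 := by
          exact Finset.sum_congr rfl fun k _ => by simp [eq_comm]
      _ = ∑ k : Fin (a + b), if i = ι' k then 1 else 0 := hs
      _ = ∑ k : Fin (a + b), if ι' k = i then 1 else 0 := by
          exact Finset.sum_congr rfl fun k _ => by simp [eq_comm]
  have : ι = ι' := monotone_eq_of_counts ι ι' hmι hmι' hcounts
  rw [hUeq, hU'eq, this]
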